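/- Let X₀, X̃₀ ∈ 𝒮 be two initial configurations with the same position δ := δ(X₀) = δ(X̃₀) ∈ ℤ ∪ {−∞} of the rightmost infinite barrier. Fix j₀ > δ and assume condition (H1) at time 0: for all j with δ < j ≤ j₀, X̃₀(j) = X₀(j) and ∑_{i≥j} X₀(i) = ∑_{i≥j} X̃₀(i). Let (X_n) and (X̃_n) be the IBMs defined from X₀ and X̃₀ using the same i.i.d. sequence (ξ_n) of law μ. Then (H1) holds at all times n, and for all n ≥ 0 and all j with δ < j ≤ j₀ + 1: X̃_{n+1}(j) = X̃_n(j) + 1 if and only if X_{n+1}(j) = X_n(j) + 1, almost surely. -/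

import Mathlib

open MeasureTheory ProbabilityTheory Filter Set
open scoped ENNReal Topology Classical

noncomputable section

/-- A configuration of balls: the number of balls (in `ℤ₊ ∪ {∞}`) in each bin. -/
abbrev Config := ℤ → ℕ∞

/-- A valid configuration: the support is nonempty and bounded above. -/
def IsConfig (X : Config) : Prop :=
  (∃ j, X j ≠ 0) ∧ ∃ M : ℤ, ∀ j, X j ≠ 0 → j ≤ M

/-- `tailSum X j = ∑_{i ≥ j} X i`. -/
def tailSum (X : Config) (j : ℤ) : ℕ∞ :=
  ⨆ m : ℤ, ∑ i ∈ Finset.Icc j m, X i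

/-- One step of the infinite-bin model dynamics: `Phi ξ X` adds one ball to the bin
immediately to the right of the bin containing the `ξ`-th rightmost ball of `X`
(i.e. to bin `B(X,ξ) + 1` where `B(X,ξ) = sup {j : ∑_{i ≥ j} X i ≥ ξ}`), and does
nothing when `B(X,ξ) = -∞`, i.e. when no bin `j` satisfies `∑_{i ≥ j} X i ≥ ξ`. -/
def Phi (ξ : ℕ) (X : Config) : Config := fun j =>
  X j + (if (ξ : ℕ∞) ≤ tailSum X (j - 1) ∧ ¬ (ξ : ℕ∞) ≤ tailSum X j then 1 else 0)

/-- The infinite-bin model driven by the sequence `ξ`, started from `X₀`: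
`X_{n+1} = Phi (ξ n) X_n`. -/
def ibm (X₀ : Config) (ξ : ℕ → ℕ) : ℕ → Config
  | 0 => X₀
  | n + 1 => Phi (ξ n) (ibm X₀ ξ n)

/-- `X_∞(k)`: the limit (= supremum, by monotonicity) of the number of balls in bin `k`. -/
def ibmLimit (X₀ : Config) (ξ : ℕ → ℕ) (k : ℤ) : ℕ∞ :=
  ⨆ n, ibm X₀ ξ n k

/-- `ξ` is a sequence of i.i.d. random variables with law `μ` on `(Ω, P)`. -/
def IsIIDSeq {Ω : Type*} [MeasurableSpace Ω] (P : Measure Ω) (μ : Measure ℕ)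
    (ξ : ℕ → Ω → ℕ) : Prop :=
  (∀ n, Measurable (ξ n)) ∧
    iIndepFun ξ P ∧ ∀ n, P.map (ξ n) = μ

/-- The barrier configuration `X̂₀`: an infinite bin at `0`, all other bins empty. -/
def barrier : Config := fun j => if j = 0 then ⊤ else 0

/-- The tail `μ̄(j) = μ({j, j+1, ...})` of a distribution on `ℕ`. -/
def tailμ (μ : Measure ℕ) (j : ℕ) : ℝ≥0∞ := μ {i | j ≤ i}

/-- `μ` (represented by the i.i.d. driving sequence `ξ` on `(Ω, P)`) is of type `d`:
almost surely, `d = inf {k ≥ 1 : X̂_∞(k) < ∞}` for the IBM started from the barrier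
configuration (with `inf ∅ = ∞` in `ℕ ∪ {∞}`). -/
def IsTypeOf {Ω : Type*} [MeasurableSpace Ω] (P : Measure Ω) (ξ : ℕ → Ω → ℕ)
    (d : ℕ∞) : Prop :=
  ∀ᵐ ω ∂P, sInf {k : ℕ∞ | ∃ m : ℕ, 1 ≤ m ∧ k = (m : ℕ∞) ∧
    ibmLimit barrier (fun i => ξ i ω) (m : ℤ) < ⊤} = d

/-- `δ ∈ ℤ ∪ {-∞}` is the position `δ(X) = sup {j : X j = ∞}` of the rightmost
infinite bin ("barrier") of `X`, with `sup ∅ = -∞ = ⊥`. -/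
def IsRightmostBarrier (X : Config) (δ : WithBot ℤ) : Prop :=
  (∀ j : ℤ, X j = ⊤ → (j : WithBot ℤ) ≤ δ) ∧
    (∀ j : ℤ, (j : WithBot ℤ) ≤ δ → ∃ i : ℤ, j ≤ i ∧ X i = ⊤)

end

section Aux

lemma tailSum_eq_sum {X : Config} {M : ℤ} (hM : ∀ i, X i ≠ 0 → i ≤ M)
    {j m : ℤ} (hm : M ≤ m) :
    tailSum X j = ∑ i ∈ Finset.Icc j m, X i := by
  apply le_antisymm
  · apply iSup_le; intro m'
    calc ∑ i ∈ Finset.Icc j m', X i ≤ ∑ i ∈ Finset.Icc j (max m m'), X i :=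
          Finset.sum_le_sum_of_subset (Finset.Icc_subset_Icc_right (le_max_right _ _))
      _ = ∑ i ∈ Finset.Icc j m, X i := by
          refine (Finset.sum_subset (Finset.Icc_subset_Icc_right (le_max_left _ _)) ?_).symm
          intro i hi hni
          by_contra h
          have := hM i h
          simp only [Finset.mem_Icc] at hi hni
          omega
  · exact le_iSup (fun m' => ∑ i ∈ Finset.Icc j m', X i) m

lemma tailSum_anti {X : Config} {j k : ℤ} (h : j ≤ k) : tailSum X k ≤ tailSum X j := by
  apply iSup_le; intro m
  calc ∑ i ∈ Finset.Icc k m, X i ≤ ∑ i ∈ Finset.Icc j m, X i :=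
        Finset.sum_le_sum_of_subset (Finset.Icc_subset_Icc_left h)
    _ ≤ tailSum X j := le_iSup (fun m' => ∑ i ∈ Finset.Icc j m', X i) m

lemma self_le_tailSum (X : Config) (j : ℤ) : X j ≤ tailSum X j := by
  have h : X j = ∑ i ∈ Finset.Icc j j, X i := by simp
  rw [h]
  exact le_iSup (fun m' => ∑ i ∈ Finset.Icc j m', X i) j

lemma tailSum_eq_zero {X : Config} {M : ℤ} (hM : ∀ i, X i ≠ 0 → i ≤ M)
    {j : ℤ} (hj : M < j) : tailSum X j = 0 := by
  rw [tailSum_eq_sum hM hj.le]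
  simp only [Finset.Icc_self, Finset.sum_singleton]
  by_contra h
  exact absurd (hM j h) (by omega)

lemma tailSum_cons {X : Config} {M : ℤ} (hM : ∀ i, X i ≠ 0 → i ≤ M) (j : ℤ) :
    tailSum X j = X j + tailSum X (j + 1) := by
  set m := max M j with hm
  rw [tailSum_eq_sum hM (le_max_left M j), tailSum_eq_sum hM (le_max_left M j)]
  have hjm : j ≤ m := le_max_right M j
  rw [← Finset.sum_erase_add _ _ (Finset.mem_Icc.mpr ⟨le_refl j, hjm⟩)]
  rw [Finset.Icc_erase_left]
  rw [add_comm]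
  congr 1
  congr 1
  ext i
  simp only [Finset.mem_Ioc, Finset.mem_Icc]
  omega

lemma le_phi (c : ℕ) (X : Config) (j : ℤ) : X j ≤ Phi c X j := le_self_add

lemma phi_ne_top {X : Config} {j : ℤ} (h : X j ≠ ⊤) (c : ℕ) : Phi c X j ≠ ⊤ := by
  unfold Phi
  rw [ne_eq, ENat.add_eq_top, not_or]
  refine ⟨h, ?_⟩
  split_ifs <;> simp

lemma phi_support {X : Config} {M : ℤ} (hM : ∀ i, X i ≠ 0 → i ≤ M) (c : ℕ) :
    ∀ i, Phi c X i ≠ 0 → i ≤ M + 1 := by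
  intro i hi
  by_contra h
  push_neg at h
  have hX : X i = 0 := by
    by_contra hX
    exact absurd (hM i hX) (by omega)
  have htail : tailSum X (i - 1) = 0 := tailSum_eq_zero hM (by omega)
  unfold Phi at hi
  rw [hX, zero_add, htail] at hi
  split_ifs at hi with hc
  · exact hc.2 (le_trans hc.1 (zero_le))
  · exact hi rfl

lemma tailSum_phi {X : Config} {M : ℤ} (hM : ∀ i, X i ≠ 0 → i ≤ M) (c : ℕ) (j : ℤ) :
    tailSum (Phi c X) j = tailSum X j +
      (if 1 ≤ c ∧ (c : ℕ∞) ≤ tailSum X (j - 1) then 1 else 0) := by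
  set m := max (M + 1) j with hmdef
  have hm1 : M + 1 ≤ m := le_max_left _ _
  have hjm : j ≤ m := le_max_right _ _
  rw [tailSum_eq_sum (phi_support hM c) hm1, tailSum_eq_sum hM (by omega : M ≤ m)]
  unfold Phi
  rw [Finset.sum_add_distrib]
  congr 1
  -- remains: sum of indicators = ite
  by_cases hc1 : 1 ≤ c
  · by_cases hcj : (c : ℕ∞) ≤ tailSum X (j - 1)
    · rw [if_pos ⟨hc1, hcj⟩]
      -- least element of S
      have hm0 : ¬ (c : ℕ∞) ≤ tailSum X m := by
        rw [tailSum_eq_zero hM (by omega : M < m)]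
        intro h
        have hc0 : (c : ℕ∞) = 0 := le_antisymm h (zero_le)
        have : c = 0 := by exact_mod_cast hc0
        omega
      obtain ⟨i0, ⟨hi0j, hi0⟩, hmin⟩ := Int.exists_least_of_bdd
        (P := fun z => j ≤ z ∧ ¬ (c : ℕ∞) ≤ tailSum X z) ⟨j, fun z hz => hz.1⟩ ⟨m, hjm, hm0⟩
      have hi0m : i0 ≤ m := hmin m ⟨hjm, hm0⟩
      have hprev : (c : ℕ∞) ≤ tailSum X (i0 - 1) := by
        rcases eq_or_lt_of_le hi0j with h | h
        · rw [← h]; exact hcj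
        · by_contra hcon
          have := hmin (i0 - 1) ⟨by omega, hcon⟩
          omega
      rw [Finset.sum_eq_single_of_mem i0 (Finset.mem_Icc.mpr ⟨hi0j, hi0m⟩)]
      · rw [if_pos ⟨hprev, hi0⟩]
      · intro b hb hbne
        rw [Finset.mem_Icc] at hb
        rw [if_neg]
        rintro ⟨hb1, hb2⟩
        have hib : i0 ≤ b := hmin b ⟨hb.1, hb2⟩
        have : i0 ≤ b - 1 := by
          rcases eq_or_lt_of_le hib with h | h
          · exact absurd h.symm hbne
          · omega
        exact hi0 (le_trans hb1 (tailSum_anti this))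
    · rw [if_neg (fun h => hcj h.2)]
      rw [Finset.sum_eq_zero]
      intro i hi
      rw [Finset.mem_Icc] at hi
      rw [if_neg]
      rintro ⟨h1, _⟩
      exact hcj (le_trans h1 (tailSum_anti (by omega)))
  · rw [if_neg (fun h => hc1 h.1)]
    rw [Finset.sum_eq_zero]
    intro i _
    rw [if_neg]
    rintro ⟨_, h2⟩
    have : c = 0 := by omega
    subst this
    exact h2 (by simp)

lemma ibm_top {X₀ : Config} {ξ : ℕ → ℕ} {j : ℤ} (h : X₀ j = ⊤) :
    ∀ n, ibm X₀ ξ n j = ⊤ := by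
  intro n
  induction n with
  | zero => exact h
  | succ n ih => exact top_le_iff.mp (ih ▸ le_phi (ξ n) _ j)

lemma ibm_ne_top {X₀ : Config} {ξ : ℕ → ℕ} {j : ℤ} (h : X₀ j ≠ ⊤) :
    ∀ n, ibm X₀ ξ n j ≠ ⊤ := by
  intro n
  induction n with
  | zero => exact h
  | succ n ih => exact phi_ne_top ih (ξ n)

lemma ibm_support {X₀ : Config} {ξ : ℕ → ℕ} {M : ℤ} (hM : ∀ i, X₀ i ≠ 0 → i ≤ M) :
    ∀ n, ∀ i, ibm X₀ ξ n i ≠ 0 → i ≤ M + n := by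
  intro n
  induction n with
  | zero => simpa [ibm] using hM
  | succ n ih =>
      have := phi_support ih (ξ n)
      intro i hi
      have := this i hi
      omega

lemma ne_add_one {a : ℕ∞} (h : a ≠ ⊤) : ¬ a = a + 1 := by
  lift a to ℕ using h
  intro hc
  have : (a : ℕ∞) + 1 = ((a + 1 : ℕ) : ℕ∞) := by push_cast; ring
  rw [this] at hc
  have : a = a + 1 := by exact_mod_cast hc
  omega

/-- Deterministic core of statement 11. -/
lemma stmt11_det (X₀ Xt₀ : Config)
    (hX₀ : ∃ M : ℤ, ∀ j, X₀ j ≠ 0 → j ≤ M) (hXt₀ : ∃ M : ℤ, ∀ j, Xt₀ j ≠ 0 → j ≤ M)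
    (δ : WithBot ℤ)
    (hδ : (∀ j : ℤ, X₀ j = ⊤ → (j : WithBot ℤ) ≤ δ) ∧
      (∀ j : ℤ, (j : WithBot ℤ) ≤ δ → ∃ i : ℤ, j ≤ i ∧ X₀ i = ⊤))
    (hδt : (∀ j : ℤ, Xt₀ j = ⊤ → (j : WithBot ℤ) ≤ δ) ∧
      (∀ j : ℤ, (j : WithBot ℤ) ≤ δ → ∃ i : ℤ, j ≤ i ∧ Xt₀ i = ⊤))
    (j₀ : ℤ) (hj₀ : δ < (j₀ : WithBot ℤ))
    (hH1 : ∀ j : ℤ, δ < (j : WithBot ℤ) → j ≤ j₀ →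
      Xt₀ j = X₀ j ∧ tailSum X₀ j = tailSum Xt₀ j)
    (ξ : ℕ → ℕ) :
    ∀ n : ℕ,
      (∀ j : ℤ, δ < (j : WithBot ℤ) → j ≤ j₀ →
        ibm Xt₀ ξ n j = ibm X₀ ξ n j ∧
          tailSum (ibm X₀ ξ n) j = tailSum (ibm Xt₀ ξ n) j) ∧
      (∀ j : ℤ, δ < (j : WithBot ℤ) → j ≤ j₀ + 1 →
        (ibm Xt₀ ξ (n + 1) j = ibm Xt₀ ξ n j + 1 ↔
          ibm X₀ ξ (n + 1) j = ibm X₀ ξ n j + 1)) := by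
  obtain ⟨M, hM⟩ := hX₀
  obtain ⟨Mt, hMt⟩ := hXt₀
  -- bins right of δ are finite
  have hfin : ∀ j : ℤ, δ < (j : WithBot ℤ) → ∀ n, ibm X₀ ξ n j ≠ ⊤ := by
    intro j hj n
    exact ibm_ne_top (fun h => absurd (hδ.1 j h) (not_le.mpr hj)) n
  have hfint : ∀ j : ℤ, δ < (j : WithBot ℤ) → ∀ n, ibm Xt₀ ξ n j ≠ ⊤ := by
    intro j hj n
    exact ibm_ne_top (fun h => absurd (hδt.1 j h) (not_le.mpr hj)) n
  -- tails at or left of δ are ⊤ for both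
  have htailtop : ∀ j : ℤ, (j : WithBot ℤ) ≤ δ → ∀ n,
      tailSum (ibm X₀ ξ n) j = ⊤ ∧ tailSum (ibm Xt₀ ξ n) j = ⊤ := by
    intro j hj n
    constructor
    · obtain ⟨i, hji, hi⟩ := hδ.2 j hj
      exact top_le_iff.mp (ibm_top hi n ▸
        le_trans (self_le_tailSum (ibm X₀ ξ n) i) (tailSum_anti hji))
    · obtain ⟨i, hji, hi⟩ := hδt.2 j hj
      exact top_le_iff.mp (ibm_top hi n ▸
        le_trans (self_le_tailSum (ibm Xt₀ ξ n) i) (tailSum_anti hji))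
  -- H1 holds for all n
  have H1 : ∀ n, ∀ j : ℤ, δ < (j : WithBot ℤ) → j ≤ j₀ →
      ibm Xt₀ ξ n j = ibm X₀ ξ n j ∧
        tailSum (ibm X₀ ξ n) j = tailSum (ibm Xt₀ ξ n) j := by
    intro n
    induction n with
    | zero => exact hH1
    | succ n ih =>
        -- tails equal for δ < j ≤ j₀ + 1
        have tails : ∀ j : ℤ, δ < (j : WithBot ℤ) → j ≤ j₀ + 1 →
            tailSum (ibm X₀ ξ n) j = tailSum (ibm Xt₀ ξ n) j := by
          intro j hj hjle
          rcases lt_or_ge j (j₀ + 1) with h | h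
          · exact (ih j hj (by omega)).2
          · have hjj : j = j₀ + 1 := by omega
            subst hjj
            have h1 := tailSum_cons (ibm_support (ξ := ξ) hM n) j₀
            have h2 := tailSum_cons (ibm_support (ξ := ξ) hMt n) j₀
            have hb := (ih j₀ hj₀ le_rfl).1
            have ht := (ih j₀ hj₀ le_rfl).2
            rw [h1, h2, hb] at ht
            exact WithTop.add_left_cancel (hfin j₀ hj₀ n) ht
        -- tails equal at j-1 whenever δ < j ≤ j₀ + 1
        have tailsPrev : ∀ j : ℤ, δ < (j : WithBot ℤ) → j ≤ j₀ + 1 →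
            tailSum (ibm X₀ ξ n) (j - 1) = tailSum (ibm Xt₀ ξ n) (j - 1) := by
          intro j hj hjle
          rcases le_or_gt ((j - 1 : ℤ) : WithBot ℤ) δ with h | h
          · rw [(htailtop _ h n).1, (htailtop _ h n).2]
          · exact tails (j - 1) h (by omega)
        intro j hj hjle
        have hcond : ((ξ n : ℕ∞) ≤ tailSum (ibm Xt₀ ξ n) (j - 1) ∧
              ¬ (ξ n : ℕ∞) ≤ tailSum (ibm Xt₀ ξ n) j) ↔
            ((ξ n : ℕ∞) ≤ tailSum (ibm X₀ ξ n) (j - 1) ∧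
              ¬ (ξ n : ℕ∞) ≤ tailSum (ibm X₀ ξ n) j) := by
          rw [tailsPrev j hj (by omega), tails j hj (by omega)]
        constructor
        · show Phi (ξ n) (ibm Xt₀ ξ n) j = Phi (ξ n) (ibm X₀ ξ n) j
          unfold Phi
          rw [(ih j hj hjle).1]
          congr 1
          exact if_congr hcond rfl rfl
        · show tailSum (Phi (ξ n) (ibm X₀ ξ n)) j = tailSum (Phi (ξ n) (ibm Xt₀ ξ n)) j
          rw [tailSum_phi (ibm_support (ξ := ξ) hM n) (ξ n) j,
            tailSum_phi (ibm_support (ξ := ξ) hMt n) (ξ n) j,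
            (ih j hj hjle).2, tailsPrev j hj (by omega)]
  intro n
  refine ⟨H1 n, ?_⟩
  intro j hj hjle
  -- tails equal for δ < j ≤ j₀ + 1 at time n (as above)
  have tails : ∀ k : ℤ, δ < (k : WithBot ℤ) → k ≤ j₀ + 1 →
      tailSum (ibm X₀ ξ n) k = tailSum (ibm Xt₀ ξ n) k := by
    intro k hk hkle
    rcases lt_or_ge k (j₀ + 1) with h | h
    · exact (H1 n k hk (by omega)).2
    · have hkk : k = j₀ + 1 := by omega
      subst hkk
      have h1 := tailSum_cons (ibm_support (ξ := ξ) hM n) j₀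
      have h2 := tailSum_cons (ibm_support (ξ := ξ) hMt n) j₀
      have hb := (H1 n j₀ hj₀ le_rfl).1
      have ht := (H1 n j₀ hj₀ le_rfl).2
      rw [h1, h2, hb] at ht
      exact WithTop.add_left_cancel (hfin j₀ hj₀ n) ht
  have tailsPrev : tailSum (ibm X₀ ξ n) (j - 1) = tailSum (ibm Xt₀ ξ n) (j - 1) := by
    rcases le_or_gt ((j - 1 : ℤ) : WithBot ℤ) δ with h | h
    · rw [(htailtop _ h n).1, (htailtop _ h n).2]
    · exact tails (j - 1) h (by omega)
  have hcond : ((ξ n : ℕ∞) ≤ tailSum (ibm Xt₀ ξ n) (j - 1) ∧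
        ¬ (ξ n : ℕ∞) ≤ tailSum (ibm Xt₀ ξ n) j) ↔
      ((ξ n : ℕ∞) ≤ tailSum (ibm X₀ ξ n) (j - 1) ∧
        ¬ (ξ n : ℕ∞) ≤ tailSum (ibm X₀ ξ n) j) := by
    rw [tailsPrev, tails j hj hjle]
  have key : ∀ (Y : Config) (hY : ∀ m, ibm Y ξ m j ≠ ⊤)
      (hc : ((ξ n : ℕ∞) ≤ tailSum (ibm Y ξ n) (j - 1) ∧
        ¬ (ξ n : ℕ∞) ≤ tailSum (ibm Y ξ n) j) ∨
        ¬ ((ξ n : ℕ∞) ≤ tailSum (ibm Y ξ n) (j - 1) ∧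
          ¬ (ξ n : ℕ∞) ≤ tailSum (ibm Y ξ n) j)),
      (ibm Y ξ (n + 1) j = ibm Y ξ n j + 1 ↔
        ((ξ n : ℕ∞) ≤ tailSum (ibm Y ξ n) (j - 1) ∧
          ¬ (ξ n : ℕ∞) ≤ tailSum (ibm Y ξ n) j)) := by
    intro Y hY _
    show Phi (ξ n) (ibm Y ξ n) j = ibm Y ξ n j + 1 ↔ _
    unfold Phi
    split_ifs with h
    · simp [h]
    · rw [add_zero]
      exact iff_of_false (ne_add_one (hY n)) h
  rw [key Xt₀ (fun m => hfint j hj m) (em _), key X₀ (fun m => hfin j hj m) (em _)]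
  exact hcond

end Aux

/-- Coupling with the same driving sequence: if `X₀, X̃₀` have the same
rightmost barrier `δ`, `j₀ > δ`, and condition (H1) holds at time `0` (equal bin contents
and equal tails on `⟦δ+1, j₀⟧`), then almost surely (H1) holds at all times `n`, and for
all `n` and all `δ < j ≤ j₀ + 1`, bin `j` of `X̃` increments at time `n+1` iff bin `j` of
`X` does. -/
theorem stmt11 {Ω : Type*} [MeasurableSpace Ω] (P : Measure Ω) [IsProbabilityMeasure P]
    (μ : Measure ℕ) [IsProbabilityMeasure μ] (hμ0 : μ {0} = 0)
    (ξ : ℕ → Ω → ℕ) (hξ : IsIIDSeq P μ ξ)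
    (X₀ Xt₀ : Config) (hX₀ : IsConfig X₀) (hXt₀ : IsConfig Xt₀)
    (δ : WithBot ℤ) (hδ : IsRightmostBarrier X₀ δ) (hδt : IsRightmostBarrier Xt₀ δ)
    (j₀ : ℤ) (hj₀ : δ < (j₀ : WithBot ℤ))
    (hH1 : ∀ j : ℤ, δ < (j : WithBot ℤ) → j ≤ j₀ →
      Xt₀ j = X₀ j ∧ tailSum X₀ j = tailSum Xt₀ j) :
    ∀ᵐ ω ∂P, ∀ n : ℕ,
      (∀ j : ℤ, δ < (j : WithBot ℤ) → j ≤ j₀ →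
        ibm Xt₀ (fun i => ξ i ω) n j = ibm X₀ (fun i => ξ i ω) n j ∧
          tailSum (ibm X₀ (fun i => ξ i ω) n) j = tailSum (ibm Xt₀ (fun i => ξ i ω) n) j) ∧
      (∀ j : ℤ, δ < (j : WithBot ℤ) → j ≤ j₀ + 1 →
        (ibm Xt₀ (fun i => ξ i ω) (n + 1) j = ibm Xt₀ (fun i => ξ i ω) n j + 1 ↔
          ibm X₀ (fun i => ξ i ω) (n + 1) j = ibm X₀ (fun i => ξ i ω) n j + 1)) := by
  refine MeasureTheory.ae_of_all P fun ω => ?_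
  exact stmt11_det X₀ Xt₀ hX₀.2 hXt₀.2 δ hδ hδt j₀ hj₀ hH1 (fun i => ξ i ω)
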